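/- Let 0 < ρ < 1 and (g_n)_{n≥1} a complex sequence satisfying the gap property: there is a strictly increasing sequence (n_k) of positive integers with ρ^{n_{k+1}−n_k}|g_{n_k}|²/(n_k ρ^{n_k}) → ∞. Then Σ_{n≥1} δ|g_n|²/(n(δ² + ρ^{2n})) → ∞ as δ → 0⁺. -/

import Mathlib

open Filter Topology

/-- Under the gap property GP, Σ_{n≥1} δ|g_n|²/(n(δ²+ρ^{2n})) → ∞ as δ → 0⁺. -/
theorem stmt6 (ρ : ℝ) (hρ : 0 < ρ) (hρ1 : ρ < 1) (g : ℕ → ℂ)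
    (nk : ℕ → ℕ) (hmono : StrictMono nk) (hpos : 1 ≤ nk 0)
    (hGP : Tendsto (fun k : ℕ =>
        ρ ^ (nk (k + 1) - nk k) * ‖g (nk k)‖ ^ 2 /
          (nk k * ρ ^ nk k)) atTop atTop) :
    Tendsto (fun δ : ℝ => ∑' n : ℕ, ENNReal.ofReal
        (δ * ‖g (n + 1)‖ ^ 2 / ((n + 1) * (δ ^ 2 + ρ ^ (2 * (n + 1))))))
      (𝓝[>] (0 : ℝ)) (𝓝 ⊤) := by
  classical
  rw [ENNReal.tendsto_nhds_top_iff_nat]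
  intro N
  obtain ⟨K, hK⟩ := eventually_atTop.mp (hGP.eventually_ge_atTop (2 * ((N : ℝ) + 1)))
  have hρK : (0 : ℝ) < ρ ^ nk K := pow_pos hρ _
  filter_upwards [Ioo_mem_nhdsGT_of_mem (Set.left_mem_Ico.2 hρK)] with δ hδ
  obtain ⟨hδ0, hδK⟩ := hδ
  -- eventually ρ ^ nk j < δ
  have htend : Tendsto (fun j : ℕ => ρ ^ nk j) atTop (𝓝 0) :=
    (tendsto_pow_atTop_nhds_zero_of_lt_one hρ.le hρ1).comp hmono.tendsto_atTop
  obtain ⟨J0, hJ0⟩ := eventually_atTop.mp (htend.eventually (gt_mem_nhds hδ0))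
  set P : ℕ → Prop := fun j => δ ≤ ρ ^ nk j with hP
  set J := max K J0 with hJ
  have hPK : P K := hδK.le
  have hnPJ : ¬ P J := not_le.2 (hJ0 J (le_max_right _ _))
  set k := Nat.findGreatest P J with hk
  have hPk : P k := Nat.findGreatest_spec (le_max_left K J0) hPK
  have hKk : K ≤ k := Nat.le_findGreatest (le_max_left K J0) hPK
  have hkJ : k < J := lt_of_le_of_ne (Nat.findGreatest_le J) (fun h => hnPJ (h ▸ hPk))
  have hnPk1 : ¬ P (k + 1) := Nat.findGreatest_is_greatest (Nat.lt_succ_self k) hkJ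
  have hbδ : ρ ^ nk (k + 1) < δ := not_le.mp hnPk1
  set m := nk k with hmdef
  have hm1 : 1 ≤ m := hpos.trans (hmono.monotone (Nat.zero_le k))
  have hmm : m - 1 + 1 = m := Nat.succ_pred_eq_of_pos hm1
  have hmpos : (0 : ℝ) < (m : ℝ) := by exact_mod_cast hm1
  set A := ‖g m‖ ^ 2 with hAdef
  have hA : 0 ≤ A := sq_nonneg _
  set a := ρ ^ m with hadef
  have ha : 0 < a := pow_pos hρ _
  have hδa : δ ≤ a := hPk
  have hgap : 2 * ((N : ℝ) + 1) ≤ ρ ^ (nk (k + 1) - nk k) * A / (↑m * a) := hK k hKk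
  have hd : ρ ^ (nk (k + 1) - nk k) * a = ρ ^ nk (k + 1) := by
    rw [hadef, ← pow_add, Nat.sub_add_cancel (hmono (Nat.lt_succ_self k)).le]
  -- the key real inequality
  have hterm : (N : ℝ) + 1 ≤ δ * A / (↑m * (δ ^ 2 + a ^ 2)) := by
    have h1 : (N : ℝ) + 1 ≤ ρ ^ (nk (k + 1) - nk k) * A / (↑m * a) / 2 := by linarith
    have h2 : ρ ^ (nk (k + 1) - nk k) * A / (↑m * a) / 2
        = ρ ^ nk (k + 1) * A / (↑m * (2 * a ^ 2)) := by
      rw [← hd]; field_simp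
    have h3 : ρ ^ nk (k + 1) * A / (↑m * (2 * a ^ 2)) ≤ δ * A / (↑m * (δ ^ 2 + a ^ 2)) := by
      apply div_le_div₀ (mul_nonneg hδ0.le hA)
        (mul_le_mul_of_nonneg_right hbδ.le hA)
        (by positivity)
      have : δ ^ 2 ≤ a ^ 2 := pow_le_pow_left₀ hδ0.le hδa 2
      nlinarith
    linarith [h2 ▸ h1, h3]
  -- compare with the single term at index m - 1
  refine lt_of_lt_of_le ?_ (ENNReal.le_tsum (m - 1))
  have e1 : ((m - 1 : ℕ) : ℝ) + 1 = (m : ℝ) := by rw [← Nat.cast_add_one, hmm]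
  have e2 : 2 * (m - 1 + 1) = 2 * m := by rw [hmm]
  have e3 : ρ ^ (2 * m) = a ^ 2 := by rw [hadef, ← pow_mul, Nat.mul_comm]
  rw [hmm, e1, e3]
  calc (N : ENNReal) < ENNReal.ofReal ((N : ℝ) + 1) := by
        rw [show ((N : ℝ) + 1) = ((N + 1 : ℕ) : ℝ) by push_cast; ring,
          ENNReal.ofReal_natCast]
        exact_mod_cast Nat.lt_succ_self N
    _ ≤ _ := ENNReal.ofReal_le_ofReal hterm
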